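/- For k ≥ 1, the generating function of Motzkin paths staying strictly below height k is the ratio of inverse Motzkin polynomials: Σ_{n≥0} M_{n;ω}^{(k)} t^n = (Σ_{i=0}^{k−1} m_{k−1,i} t^{k−1−i}) / (Σ_{i=0}^{k} m_{k,i} t^{k−i}). -/

import Mathlib

open scoped BigOperators

/-- Weighted count of Motzkin paths from (0,0) to (n,j) staying weakly above the
x-axis and strictly below the line y = k, horizontal steps weighted ω. -/
def motzkinB (ω : ℚ) (k : ℕ) : ℕ → ℤ → ℚ
  | 0, j => if j = 0 ∧ 0 < (k:ℤ) then 1 else 0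
  | n+1, j => if j < 0 ∨ (k:ℤ) ≤ j then 0 else
      motzkinB ω k n (j-1) + ω * motzkinB ω k n j + motzkinB ω k n (j+1)

/-- Inverse Motzkin matrix entries: m i j is the coefficient of t^i in
t^j * (1 + ω t + t^2)⁻¹ ^ (j+1). -/
noncomputable def minv (ω : ℚ) (i j : ℕ) : ℚ :=
  PowerSeries.coeff (R := ℚ) i ((PowerSeries.X : PowerSeries ℚ) ^ j *
    ((1 + PowerSeries.C (R := ℚ) ω * PowerSeries.X + PowerSeries.X ^ 2)⁻¹) ^ (j + 1))


open PowerSeries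

noncomputable def FF (ω : ℚ) : PowerSeries ℚ :=
  (1 + PowerSeries.C (R := ℚ) ω * PowerSeries.X + PowerSeries.X ^ 2)⁻¹

lemma hFF (ω : ℚ) :
    (1 + PowerSeries.C (R := ℚ) ω * PowerSeries.X + PowerSeries.X ^ 2) * FF ω = 1 :=
  PowerSeries.mul_inv_cancel _ (by simp)

noncomputable def aa (ω : ℚ) (n i : ℕ) : ℚ := PowerSeries.coeff (R := ℚ) n (FF ω ^ (i+1))

lemma ccFF (ω : ℚ) : PowerSeries.constantCoeff (R := ℚ) (FF ω) = 1 := by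
  rw [FF, PowerSeries.constantCoeff_inv]; simp

lemma aa0 (ω : ℚ) (i : ℕ) : aa ω 0 i = 1 := by
  rw [aa, PowerSeries.coeff_zero_eq_constantCoeff, map_pow, ccFF, one_pow]

-- coefficient extraction for (1 + Cω X + X^2) * g
lemma coeff_mul2 (ω : ℚ) (g : PowerSeries ℚ) (n : ℕ) :
    PowerSeries.coeff (R := ℚ) (n+2) ((1 + PowerSeries.C (R := ℚ) ω * PowerSeries.X + PowerSeries.X ^ 2) * g)
      = PowerSeries.coeff (R := ℚ) (n+2) g + ω * PowerSeries.coeff (R := ℚ) (n+1) g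
        + PowerSeries.coeff (R := ℚ) n g := by
  rw [add_mul, add_mul, one_mul, map_add, map_add, mul_assoc,
    PowerSeries.coeff_C_mul, PowerSeries.coeff_succ_X_mul,
    show n+2 = n+2 from rfl]
  rw [show (n+2) = n + 2 from rfl, PowerSeries.coeff_X_pow_mul g 2 n]

lemma coeff_mul1 (ω : ℚ) (g : PowerSeries ℚ) :
    PowerSeries.coeff (R := ℚ) 1 ((1 + PowerSeries.C (R := ℚ) ω * PowerSeries.X + PowerSeries.X ^ 2) * g)
      = PowerSeries.coeff (R := ℚ) 1 g + ω * PowerSeries.coeff (R := ℚ) 0 g := by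
  rw [add_mul, add_mul, one_mul, map_add, map_add, mul_assoc,
    PowerSeries.coeff_C_mul, show (1:ℕ) = 0 + 1 from rfl, PowerSeries.coeff_succ_X_mul]
  rw [PowerSeries.coeff_X_pow_mul' g 2 (0+1), if_neg (by norm_num)]
  ring

lemma FFpow (ω : ℚ) (i : ℕ) :
    (1 + PowerSeries.C (R := ℚ) ω * PowerSeries.X + PowerSeries.X ^ 2) * FF ω ^ (i+1) = FF ω ^ i := by
  have h : FF ω ^ (i+1) = FF ω ^ i * FF ω := pow_succ _ _
  rw [h, mul_comm (FF ω ^ i) (FF ω), ← mul_assoc, hFF, one_mul]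

lemma aarec (ω : ℚ) (n i : ℕ) :
    aa ω (n+2) (i+1) = aa ω (n+2) i - ω * aa ω (n+1) (i+1) - aa ω n (i+1) := by
  have h := coeff_mul2 ω (FF ω ^ (i+2)) n
  rw [FFpow ω (i+1)] at h
  simp only [aa]
  have : FF ω ^ (i+1+1) = FF ω ^ (i+2) := by ring_nf
  rw [this]
  linarith [h]

lemma aarec_top (ω : ℚ) (n : ℕ) :
    aa ω (n+2) 0 = - (ω * aa ω (n+1) 0) - aa ω n 0 := by
  have h := coeff_mul2 ω (FF ω ^ (0+1)) n
  rw [FFpow ω 0, pow_zero, PowerSeries.coeff_one, if_neg (by omega)] at h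
  simp only [aa]
  linarith [h]

lemma aarec1 (ω : ℚ) (i : ℕ) :
    aa ω 1 (i+1) = aa ω 1 i - ω * aa ω 0 (i+1) := by
  have h := coeff_mul1 ω (FF ω ^ (i+2))
  rw [FFpow ω (i+1)] at h
  simp only [aa]
  have : FF ω ^ (i+1+1) = FF ω ^ (i+2) := by ring_nf
  rw [this]
  linarith [h]

noncomputable def Psum (ω : ℚ) (m : ℕ) : PowerSeries ℚ :=
  ∑ i ∈ Finset.range (m+1), PowerSeries.C (R := ℚ) (aa ω (m-i) i) * PowerSeries.X ^ (m-i)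

lemma coeff_sum_gen (c : ℕ → ℚ) (m n : ℕ) :
    PowerSeries.coeff (R := ℚ) n (∑ i ∈ Finset.range (m+1), PowerSeries.C (R := ℚ) (c i) * PowerSeries.X ^ (m-i))
      = if n ≤ m then c (m-n) else 0 := by
  rw [map_sum]
  simp_rw [PowerSeries.coeff_C_mul_X_pow]
  by_cases h : n ≤ m
  · rw [if_pos h, Finset.sum_eq_single (m-n)]
    · rw [if_pos (by omega)]
    · intro b hb hbne
      rw [Finset.mem_range] at hb
      rw [if_neg (by omega)]
    · intro hmem
      exact absurd (Finset.mem_range.mpr (by omega)) hmem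
  · rw [if_neg h, Finset.sum_eq_zero]
    intro b hb
    rw [Finset.mem_range] at hb
    rw [if_neg (by omega)]

lemma coeff_Psum (ω : ℚ) (m n : ℕ) :
    PowerSeries.coeff (R := ℚ) n (Psum ω m) = if n ≤ m then aa ω n (m-n) else 0 := by
  rw [Psum, coeff_sum_gen]
  by_cases h : n ≤ m
  · rw [if_pos h, if_pos h, Nat.sub_sub_self h]
  · rw [if_neg h, if_neg h]

lemma Psum0 (ω : ℚ) : Psum ω 0 = 1 := by
  rw [Psum]
  simp [aa0]

lemma aa10 (ω : ℚ) : aa ω 1 0 = -ω := by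
  have h := coeff_mul1 ω (FF ω ^ (0+1))
  rw [FFpow ω 0, pow_zero, PowerSeries.coeff_one, if_neg (by omega)] at h
  have h0 := aa0 ω 0
  simp only [aa] at h h0 ⊢
  rw [h0] at h
  linarith [h]

lemma Psum1 (ω : ℚ) : Psum ω 1 = 1 - PowerSeries.C (R := ℚ) ω * PowerSeries.X := by
  rw [Psum, Finset.sum_range_succ, Finset.sum_range_one]
  norm_num [aa10, aa0]
  ring

lemma Prec (ω : ℚ) (m : ℕ) :
    Psum ω (m+2) = (1 - PowerSeries.C (R := ℚ) ω * PowerSeries.X) * Psum ω (m+1)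
      - PowerSeries.X ^ 2 * Psum ω m := by
  ext n
  rw [map_sub, sub_mul, one_mul, map_sub, mul_assoc, PowerSeries.coeff_C_mul]
  rw [PowerSeries.coeff_X_pow_mul' (Psum ω m) 2 n]
  rcases n with _ | n
  · simp only [coeff_Psum, Nat.zero_le, if_pos, PowerSeries.coeff_zero_X_mul]
    rw [if_neg (by omega)]
    simp [aa0]
  · rcases n with _ | n
    · rw [show (1:ℕ) = 0 + 1 from rfl, PowerSeries.coeff_succ_X_mul]
      simp only [coeff_Psum]
      rw [if_pos (by omega), if_pos (by omega), if_pos (by omega), if_neg (by omega)]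
      norm_num
      exact aarec1 ω m
    · rw [PowerSeries.coeff_succ_X_mul]
      simp only [coeff_Psum]
      rw [if_pos (by omega : 2 ≤ n + 1 + 1)]
      rcases lt_trichotomy n m with hn | hn | hn
      · rw [if_pos (by omega), if_pos (by omega), if_pos (by omega), if_pos (by omega)]
        obtain ⟨i, hi⟩ : ∃ i, m - n = i + 1 := ⟨m - n - 1, by omega⟩
        rw [show m + 2 - (n + 1 + 1) = i + 1 by omega,
            show m + 1 - (n + 1 + 1) = i by omega,
            show m + 1 - (n + 1) = i + 1 by omega,
            show n + 1 + 1 - 2 = n by omega,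
            show m - n = i + 1 from hi]
        exact aarec ω n i
      · subst hn
        rw [if_pos (by omega), if_neg (by omega), if_pos (by omega), if_pos (by omega)]
        rw [show n + 2 - (n + 1 + 1) = 0 by omega,
            show n + 1 - (n + 1) = 0 by omega,
            show n + 1 + 1 - 2 = n by omega,
            show n - n = 0 by omega]
        have := aarec_top ω n
        linarith [this]
      · rw [if_neg (by omega), if_neg (by omega), if_neg (by omega), if_neg (by omega)]
        ring

noncomputable def BB (ω : ℚ) (k : ℕ) (j : ℤ) : PowerSeries ℚ :=
  PowerSeries.mk fun n => motzkinB ω k n j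

lemma BB_out (ω : ℚ) (k : ℕ) (j : ℤ) (h : j < 0 ∨ (k:ℤ) ≤ j) : BB ω k j = 0 := by
  ext n
  rw [BB, PowerSeries.coeff_mk, map_zero]
  cases n with
  | zero =>
      rw [motzkinB, if_neg]
      rintro ⟨rfl, hk⟩
      omega
  | succ n => rw [motzkinB, if_pos h]

lemma EE (ω : ℚ) (k : ℕ) (j : ℤ) (h0 : 0 ≤ j) (hk : j < (k:ℤ)) :
    (1 - PowerSeries.C (R := ℚ) ω * PowerSeries.X) * BB ω k j
      = (if j = 0 then 1 else 0) + PowerSeries.X * BB ω k (j-1)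
        + PowerSeries.X * BB ω k (j+1) := by
  ext n
  rw [map_add, map_add, sub_mul, one_mul, map_sub, mul_assoc, PowerSeries.coeff_C_mul]
  cases n with
  | zero =>
      rw [PowerSeries.coeff_zero_X_mul, PowerSeries.coeff_zero_X_mul,
        PowerSeries.coeff_zero_X_mul]
      simp only [BB, PowerSeries.coeff_mk]
      rw [motzkinB]
      by_cases hj : j = 0
      · rw [if_pos ⟨hj, by omega⟩, if_pos hj, PowerSeries.coeff_one, if_pos rfl]
        ring
      · rw [if_neg (by tauto), if_neg hj]
        simp
  | succ n =>
      rw [PowerSeries.coeff_succ_X_mul, PowerSeries.coeff_succ_X_mul,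
        PowerSeries.coeff_succ_X_mul]
      simp only [BB, PowerSeries.coeff_mk]
      rw [motzkinB, if_neg (by omega)]
      have hone : PowerSeries.coeff (R := ℚ) (n+1) ((if j = 0 then 1 else 0) : PowerSeries ℚ) = 0 := by
        split
        · rw [PowerSeries.coeff_one, if_neg (by omega)]
        · rw [map_zero]
      rw [hone]
      ring

lemma down (ω : ℚ) (k : ℕ) : ∀ d : ℕ, (d:ℤ) + 2 ≤ (k:ℤ) →
    Psum ω (d+1) * BB ω k ((k:ℤ)-1-(d:ℤ)) = PowerSeries.X * (Psum ω d * BB ω k ((k:ℤ)-2-(d:ℤ))) := by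
  intro d
  induction d with
  | zero =>
      intro hd
      have hE := EE ω k ((k:ℤ)-1) (by omega) (by omega)
      rw [if_neg (by omega), BB_out ω k ((k:ℤ)-1+1) (by omega), mul_zero, add_zero] at hE
      rw [show (k:ℤ)-1-1 = (k:ℤ)-2 by ring] at hE
      rw [Psum1, Psum0]
      push_cast
      rw [sub_zero, sub_zero]
      linear_combination hE
  | succ d ih =>
      intro hd
      have hd' : (d:ℤ) + 2 ≤ (k:ℤ) := by push_cast at hd ⊢; omega
      have hih := ih hd'
      have hE := EE ω k ((k:ℤ)-2-(d:ℤ)) (by push_cast at hd; omega) (by push_cast at hd; omega)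
      rw [if_neg (by push_cast at hd; omega)] at hE
      rw [show (k:ℤ)-2-(d:ℤ)+1 = (k:ℤ)-1-(d:ℤ) by ring] at hE
      rw [show ((k:ℤ)-1-((d:ℕ)+1:ℕ)) = (k:ℤ)-2-(d:ℤ) by push_cast; ring,
        show ((k:ℤ)-2-((d:ℕ)+1:ℕ)) = (k:ℤ)-2-(d:ℤ)-1 by push_cast; ring]
      rw [show (d:ℕ)+1+1 = d+2 by omega]
      linear_combination BB ω k ((k:ℤ)-2-(d:ℤ)) * (Prec ω d) + Psum ω (d+1) * hE + PowerSeries.X * hih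

lemma minv_eq (ω : ℚ) (m i : ℕ) (h : i ≤ m) : minv ω m i = aa ω (m-i) i := by
  rw [minv, aa, FF, PowerSeries.coeff_X_pow_mul', if_pos h]

lemma sum_minv (ω : ℚ) (m : ℕ) :
    (∑ i ∈ Finset.range (m+1), PowerSeries.C (R := ℚ) (minv ω m i) * PowerSeries.X ^ (m - i))
      = Psum ω m := by
  refine Finset.sum_congr rfl fun i hi => ?_
  rw [Finset.mem_range] at hi
  rw [minv_eq ω m i (by omega)]

theorem bounded_motzkin_gf (ω : ℚ) (k : ℕ) (hk : 1 ≤ k) :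
    (PowerSeries.mk fun n => motzkinB ω k n 0) *
        (∑ i ∈ Finset.range (k+1), PowerSeries.C (R := ℚ) (minv ω k i) * PowerSeries.X ^ (k - i)) =
      ∑ i ∈ Finset.range k, PowerSeries.C (R := ℚ) (minv ω (k-1) i) * PowerSeries.X ^ (k-1-i) := by
  obtain ⟨m, rfl⟩ : ∃ m, k = m+1 := ⟨k-1, by omega⟩
  have hBB : (PowerSeries.mk fun n => motzkinB ω (m+1) n 0) = BB ω (m+1) 0 := rfl
  simp only [Nat.add_sub_cancel]
  rw [hBB, sum_minv, sum_minv]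
  rcases m with _ | m
  · -- k = 1
    show BB ω 1 0 * Psum ω 1 = Psum ω 0
    have hE := EE ω 1 0 le_rfl (by norm_num)
    rw [if_pos rfl, BB_out ω 1 (0-1) (by omega), BB_out ω 1 (0+1) (by omega)] at hE
    simp only [mul_zero, add_zero] at hE
    rw [Psum1, Psum0]
    linear_combination hE
  · -- k = m + 2
    show BB ω (m+2) 0 * Psum ω (m+2) = Psum ω (m+1)
    have hE := EE ω (m+2) 0 le_rfl (by push_cast; omega)
    rw [if_pos rfl, BB_out ω (m+2) (0-1) (by omega)] at hE
    simp only [mul_zero, add_zero] at hE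
    have hdown := down ω (m+2) m (by push_cast; omega)
    rw [show ((m+2:ℕ):ℤ)-1-(m:ℤ) = (0:ℤ)+1 by push_cast; ring,
      show ((m+2:ℕ):ℤ)-2-(m:ℤ) = (0:ℤ) by push_cast; ring] at hdown
    linear_combination BB ω (m+2) 0 * (Prec ω m) + Psum ω (m+1) * hE + PowerSeries.X * hdown
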